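/- arXiv:1504.05146 — 2 statements merged into one kernel-verified Lean document; each statement's English description precedes it below -/
import Mathlib

section
/- Let γ = (γ₁, …, γ_r) be a partition of n with r ≥ 2 such that (γ₂,…,γ_r) is a sign partition of S_{n-γ₁} and γ₂ + … + γ_r < 2γ₁. If β is a partition of n with χ^β_γ ∉ {0, 1, -1}, then β has exactly two hooks of length γ₁, and for each partition δ obtained from β by removing a γ₁-hook, χ^δ_{(γ₂,…,γ_r)} ≠ 0; in particular each such δ has a hook of length γ₂. -/
/-- The beta-set (set of first-column hook lengths) of a partition given as a
weakly decreasing list of parts. -/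
def betaSet (l : List ℕ) : List ℕ :=
  ((List.range l.length).zip l).map (fun p => p.2 + (l.length - 1 - p.1))

/-- Recover a partition (weakly decreasing list of positive parts) from a
list of distinct beta-numbers. -/
def fromBeta (b : List ℕ) : List ℕ :=
  let s := List.insertionSort (· ≥ ·) b
  (((List.range s.length).zip s).map (fun p => p.2 - (s.length - 1 - p.1))).filter (fun x => x ≠ 0)

/-- `MN β γ` is the value of the irreducible character of the symmetric group
indexed by the partition `β` at the conjugacy class of cycle type `γ`,
computed via the Murnaghan–Nakayama rule (phrased in terms of beta-numbers:
removing a rim hook of length `q` replaces a beta-number `x` by `x - q`,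
the sign being `(-1)` to the number of beta-numbers strictly between
`x - q` and `x`, i.e. the leg length of the hook). -/
def MN : List ℕ → List ℕ → ℤ
  | β, [] => if β = [] then 1 else 0
  | β, q :: γ =>
      ((betaSet β).map (fun x =>
        if q ≤ x ∧ x - q ∉ betaSet β then
          (-1) ^ ((betaSet β).filter (fun y => x - q < y ∧ y < x)).length *
            MN (fromBeta ((x - q) :: (betaSet β).erase x)) γ
        else 0)).sum

/-- `l` is a partition of `m`: a weakly decreasing list of positive parts
summing to `m`. -/
def IsPartition (l : List ℕ) (m : ℕ) : Prop :=
  l.Pairwise (· ≥ ·) ∧ (∀ i ∈ l, 0 < i) ∧ l.sum = m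

/-- The conjugate (transpose) partition: `(conjugate l)_i = #{j : l_j > i}`. -/
def conjugate (l : List ℕ) : List ℕ :=
  (List.range (l.foldr max 0)).map (fun i => (l.filter (fun p => i < p)).length)

def FB (s : List ℕ) : List ℕ := ((List.range s.length).zip s).map (fun p => p.2 - (s.length - 1 - p.1))

lemma enumMap_cons (h : ℕ → ℕ → ℕ) (a : ℕ) (t : List ℕ) :
    (((List.range (a :: t).length).zip (a :: t)).map (fun p => h p.2 ((a :: t).length - 1 - p.1))) =
      h a t.length :: (((List.range t.length).zip t).map fun p => h p.2 (t.length - 1 - p.1)) := by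
  apply List.ext_getElem
  · simp
  · intro i h1 h2
    rcases i with _ | i
    · simp [List.getElem_zip]
    · simp only [List.getElem_map, List.getElem_zip, List.getElem_range, List.getElem_cons_succ,
        List.length_cons]
      congr 1
      omega

lemma betaSet_cons (a : ℕ) (t : List ℕ) :
    betaSet (a :: t) = (a + t.length) :: betaSet t := by
  simpa [betaSet] using enumMap_cons (· + ·) a t

lemma betaSet_length (l : List ℕ) : (betaSet l).length = l.length := by
  simp [betaSet]

lemma betaSet_sum (l : List ℕ) :
    (betaSet l).sum = l.sum + Nat.choose l.length 2 := by
  induction l with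
  | nil => simp [betaSet]
  | cons a t ih =>
    rw [betaSet_cons, List.sum_cons, ih]
    simp [Nat.choose_succ_succ, Nat.choose_one_right]
    ring

lemma betaSet_lt (l : List ℕ) (c : ℕ) (hs : l.Pairwise (· ≥ ·))
    (hc : ∀ x ∈ l, x ≤ c) : ∀ y ∈ betaSet l, y < c + l.length := by
  induction l with
  | nil => simp [betaSet]
  | cons a t ih =>
    rw [betaSet_cons]
    intro y hy
    rcases List.mem_cons.1 hy with rfl | hy
    · have := hc a (by simp); simp; omega
    · have := ih hs.of_cons (fun x hx => hc x (List.mem_cons_of_mem _ hx)) y hy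
      simp; omega

lemma betaSet_sorted (l : List ℕ) (hs : l.Pairwise (· ≥ ·)) :
    (betaSet l).Pairwise (· > ·) := by
  induction l with
  | nil => simp [betaSet]
  | cons a t ih =>
    rw [betaSet_cons]
    refine List.pairwise_cons.2 ⟨?_, ih hs.of_cons⟩
    intro y hy
    exact betaSet_lt t a hs.of_cons (fun x hx => List.rel_of_pairwise_cons hs hx) y hy

lemma sorted_gt_length : ∀ (l : List ℕ), l.Pairwise (· > ·) →
    ∀ b, (∀ x ∈ l, x < b) → l.length ≤ b := by
  intro l
  induction l with
  | nil => simp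
  | cons a t ih =>
    intro hs b hb
    have h1 : t.length ≤ a := ih hs.of_cons a (fun x hx => List.rel_of_pairwise_cons hs hx)
    have := hb a (by simp)
    simp; omega

lemma sorted_gt_choose_le_sum : ∀ (l : List ℕ), l.Pairwise (· > ·) →
    Nat.choose l.length 2 ≤ l.sum := by
  intro l
  induction l with
  | nil => simp
  | cons a t ih =>
    intro hs
    have h1 : t.length ≤ a := sorted_gt_length t hs.of_cons a
      (fun x hx => List.rel_of_pairwise_cons hs hx)
    have := ih hs.of_cons
    simp [Nat.choose_succ_succ, Nat.choose_one_right]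
    omega

lemma nodup_choose_le_sum (l : List ℕ) (h : l.Nodup) :
    Nat.choose l.length 2 ≤ l.sum := by
  have hperm := List.perm_insertionSort (· ≥ ·) l
  have hsorted : (List.insertionSort (· ≥ ·) l).Pairwise (· ≥ ·) :=
    List.pairwise_insertionSort _ l
  have hnd : (List.insertionSort (· ≥ ·) l).Nodup := hperm.nodup_iff.2 h
  have hgt : (List.insertionSort (· ≥ ·) l).Pairwise (· > ·) :=
    (hsorted.and hnd).imp (fun h => lt_of_le_of_ne h.1 h.2.symm)
  have := sorted_gt_choose_le_sum _ hgt
  rwa [hperm.length_eq, hperm.sum_eq] at this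

lemma FB_cons (a : ℕ) (t : List ℕ) : FB (a :: t) = (a - t.length) :: FB t := by
  simpa [FB] using enumMap_cons (· - ·) a t

lemma FB_spec : ∀ (s : List ℕ), s.Pairwise (· > ·) →
    (FB s).Pairwise (· ≥ ·) ∧ (FB s).sum + Nat.choose s.length 2 = s.sum ∧
      (∀ y ∈ FB s, y + (s.length - 1) ≤ s.headI) := by
  intro s
  induction s with
  | nil => simp [FB]
  | cons a t ih =>
    intro hs
    obtain ⟨ihs, ihsum, ihbd⟩ := ih hs.of_cons
    have hlen : t.length ≤ a := sorted_gt_length t hs.of_cons a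
      (fun x hx => List.rel_of_pairwise_cons hs hx)
    have hbd : ∀ y ∈ FB t, y + t.length ≤ a := by
      intro y hy
      rcases t with _ | ⟨b, t'⟩
      · simp [FB] at hy
      · have h1 := ihbd y hy
        have h2 : b < a := List.rel_of_pairwise_cons hs (by simp)
        simp only [List.length_cons, List.headI_cons, Nat.add_sub_cancel] at h1 ⊢
        omega
    rw [FB_cons]
    refine ⟨List.pairwise_cons.2 ⟨fun y hy => by have := hbd y hy; omega, ihs⟩, ?_, ?_⟩
    · have hch : Nat.choose (t.length + 1) 2 = Nat.choose t.length 2 + t.length := by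
        simp [Nat.choose_succ_succ, Nat.choose_one_right]; omega
      simp only [List.sum_cons, List.length_cons, hch]
      omega
    · intro y hy
      rcases List.mem_cons.1 hy with rfl | hy
      · simp; omega
      · have := hbd y hy; simp; omega

lemma sum_filter_ne_zero (l : List ℕ) : (l.filter (fun x => x ≠ 0)).sum = l.sum := by
  induction l with
  | nil => simp
  | cons a t ih =>
    simp only [ne_eq, decide_not] at ih ⊢
    by_cases h : a = 0 <;> simp [List.filter_cons, h, ih]

lemma fromBeta_isPartition (b : List ℕ) (hb : b.Nodup) :
    IsPartition (fromBeta b) (b.sum - Nat.choose b.length 2) ∧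
      Nat.choose b.length 2 ≤ b.sum := by
  have hperm := List.perm_insertionSort (· ≥ ·) b
  set s := List.insertionSort (· ≥ ·) b with hs
  have hsorted : s.Pairwise (· ≥ ·) := List.pairwise_insertionSort _ b
  have hnd : s.Nodup := hperm.nodup_iff.2 hb
  have hgt : s.Pairwise (· > ·) :=
    (hsorted.and hnd).imp (fun h => lt_of_le_of_ne h.1 h.2.symm)
  obtain ⟨hFs, hFsum, _⟩ := FB_spec s hgt
  have hfb : fromBeta b = (FB s).filter (fun x => x ≠ 0) := rfl
  have hlen : s.length = b.length := hperm.length_eq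
  have hsum : s.sum = b.sum := hperm.sum_eq
  rw [hlen, hsum] at hFsum
  constructor
  · refine ⟨?_, ?_, ?_⟩
    · rw [hfb]; exact hFs.filter _
    · intro i hi
      rw [hfb] at hi
      have := List.of_mem_filter hi
      simp at this
      omega
    · rw [hfb, sum_filter_ne_zero]
      omega
  · omega

lemma MN_cons (β : List ℕ) (q : ℕ) (γ : List ℕ) :
    MN β (q :: γ) = ((betaSet β).map (fun x =>
        if q ≤ x ∧ x - q ∉ betaSet β then
          (-1) ^ ((betaSet β).filter (fun y => x - q < y ∧ y < x)).length *
            MN (fromBeta ((x - q) :: (betaSet β).erase x)) γ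
        else 0)).sum := rfl

lemma sum_map_ite (l : List ℕ) (p : ℕ → Prop) [DecidablePred p] (f : ℕ → ℤ) :
    (l.map (fun x => if p x then f x else 0)).sum
      = ((l.filter (fun x => p x)).map f).sum := by
  induction l with
  | nil => rfl
  | cons a t ih =>
    by_cases h : p a <;> simp [List.filter_cons, h, ih]

lemma MN_eq_zero_of_no_hook (δ : List ℕ) (q : ℕ) (γ : List ℕ)
    (h : ∀ y ∈ betaSet δ, ¬(q ≤ y ∧ y - q ∉ betaSet δ)) : MN δ (q :: γ) = 0 := by
  rw [MN_cons]
  apply List.sum_eq_zero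
  intro z hz
  obtain ⟨y, hy, rfl⟩ := List.mem_map.1 hz
  simp only [if_neg (h y hy)]

lemma map_sub_sum (q : ℕ) (l : List ℕ) (p : ℕ → Prop) [DecidablePred p]
    (hq : ∀ x ∈ l, p x → q ≤ x) :
    (l.map (fun x => if p x then x - q else x)).sum
      + (l.filter (fun x => p x)).length * q = l.sum := by
  induction l with
  | nil => simp
  | cons a t ih =>
    have ih' := ih (fun x hx => hq x (List.mem_cons_of_mem _ hx))
    by_cases h : p a
    · have := hq a (by simp) h
      simp [List.filter_cons, h, Nat.succ_mul]
      omega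
    · simp [List.filter_cons, h]
      omega

lemma hook_count_le (B : List ℕ) (hB : B.Nodup) (q : ℕ) :
    (B.filter (fun x => q ≤ x ∧ x - q ∉ B)).length * q
      + Nat.choose B.length 2 ≤ B.sum := by
  have hinj : ∀ x ∈ B, ∀ y ∈ B,
      (fun x => if q ≤ x ∧ x - q ∉ B then x - q else x) x
        = (fun x => if q ≤ x ∧ x - q ∉ B then x - q else x) y → x = y := by
    intro x hx y hy hxy
    simp only at hxy
    by_cases h1 : q ≤ x ∧ x - q ∉ B <;> by_cases h2 : q ≤ y ∧ y - q ∉ B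
    · rw [if_pos h1, if_pos h2] at hxy
      have := h1.1; have := h2.1; omega
    · rw [if_pos h1, if_neg h2] at hxy
      exact absurd (by rw [hxy]; exact hy) h1.2
    · rw [if_neg h1, if_pos h2] at hxy
      exact absurd (by rw [← hxy]; exact hx) h2.2
    · rw [if_neg h1, if_neg h2] at hxy
      exact hxy
  have hnd := List.Nodup.map_on hinj hB
  have h1 := nodup_choose_le_sum _ hnd
  rw [List.length_map] at h1
  have h2 := map_sub_sum q B (fun x => q ≤ x ∧ x - q ∉ B) (fun x _ hx => hx.1)
  omega

lemma sign_mul_mem (e : ℕ) (t : ℤ) (ht : t ∈ ({0, 1, -1} : Set ℤ)) :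
    (-1 : ℤ) ^ e * t ∈ ({0, 1, -1} : Set ℤ) := by
  rcases neg_one_pow_eq_or ℤ e with h | h <;>
    rcases ht with rfl | rfl | rfl <;>
      simp [h, Set.mem_insert_iff]

/-- Let `γ = (γ₁, γ₂, …, γ_r)` be a partition of `n` with `r ≥ 2` such that
`(γ₂,…,γ_r)` is a sign partition of `S_{n-γ₁}` (all irreducible character
values on that cycle type lie in `{0, 1, -1}`) and `γ₂ + … + γ_r < 2γ₁`.
If `β` is a partition of `n` whose character value at cycle type `γ` is not
in `{0, 1, -1}`, then `β` has exactly two hooks of length `γ₁` and, for each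
partition `δ` obtained from `β` by removing a `γ₁`-hook, the character value
of `δ` at `(γ₂,…,γ_r)` is nonzero; in particular each such `δ` has a hook of
length `γ₂`.  (Hooks of length `q` in a partition with beta-set `B`
correspond to elements `x ∈ B` with `q ≤ x` and `x - q ∉ B`, and removing
such a hook replaces `x` by `x - q`.) -/
theorem stmt_9 (n γ₁ γ₂ : ℕ) (γr : List ℕ)
    (hγ : IsPartition (γ₁ :: γ₂ :: γr) n)
    (hsign : ∀ δ : List ℕ, IsPartition δ (n - γ₁) →
      MN δ (γ₂ :: γr) ∈ ({0, 1, -1} : Set ℤ))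
    (hsmall : (γ₂ :: γr).sum < 2 * γ₁)
    (β : List ℕ) (hβ : IsPartition β n)
    (hval : MN β (γ₁ :: γ₂ :: γr) ∉ ({0, 1, -1} : Set ℤ)) :
    ((betaSet β).filter (fun x => γ₁ ≤ x ∧ x - γ₁ ∉ betaSet β)).length = 2 ∧
    ∀ x ∈ betaSet β, γ₁ ≤ x → x - γ₁ ∉ betaSet β →
      (MN (fromBeta ((x - γ₁) :: (betaSet β).erase x)) (γ₂ :: γr) ≠ 0 ∧
       ∃ y ∈ betaSet (fromBeta ((x - γ₁) :: (betaSet β).erase x)),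
         γ₂ ≤ y ∧ y - γ₂ ∉ betaSet (fromBeta ((x - γ₁) :: (betaSet β).erase x))) := by
  obtain ⟨hβs, hβpos, hβsum⟩ := hβ
  obtain ⟨hγs, hγpos, hγsum⟩ := hγ
  simp only [List.sum_cons] at hγsum hsmall
  have hγ₁n : γ₁ ≤ n := by omega
  have hn3 : n < 3 * γ₁ := by omega
  set B := betaSet β with hB
  have hBnd : B.Nodup := (betaSet_sorted β hβs).imp (fun h => ne_of_gt h)
  have hBsum : B.sum = n + Nat.choose B.length 2 := by
    rw [hB, betaSet_sum, hβsum, betaSet_length]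
  -- the delta partitions
  have hδ : ∀ x ∈ B, γ₁ ≤ x → x - γ₁ ∉ B →
      IsPartition (fromBeta ((x - γ₁) :: B.erase x)) (n - γ₁) := by
    intro x hx hx1 hx2
    have hnd : ((x - γ₁) :: B.erase x).Nodup :=
      List.Nodup.cons (fun h => hx2 (List.mem_of_mem_erase h)) (hBnd.erase x)
    obtain ⟨hpart, hle⟩ := fromBeta_isPartition _ hnd
    have hlen : ((x - γ₁) :: B.erase x).length = B.length := by
      have := List.length_erase_of_mem hx
      have : 0 < B.length := List.length_pos_iff.2 (List.ne_nil_of_mem hx)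
      simp [List.length_erase_of_mem hx]
      omega
    have hsum : x + (B.erase x).sum = B.sum := by
      have := (List.perm_cons_erase hx).sum_eq
      simp at this
      omega
    rw [hlen] at hpart hle
    have heq : ((x - γ₁) :: B.erase x).sum - Nat.choose B.length 2 = n - γ₁ := by
      simp only [List.sum_cons] at hle ⊢
      omega
    rwa [heq] at hpart
  -- the hook count bound
  have hk := hook_count_le B hBnd γ₁
  set F := B.filter (fun x => γ₁ ≤ x ∧ x - γ₁ ∉ B) with hF
  have hkn : F.length * γ₁ ≤ n := by omega
  have hklt : F.length ≤ 2 := by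
    by_contra h
    have h3 : 3 ≤ F.length := by omega
    have := Nat.mul_le_mul_right γ₁ h3
    omega
  -- rewrite hval
  rw [MN_cons, sum_map_ite _ (fun x => γ₁ ≤ x ∧ x - γ₁ ∉ betaSet β)] at hval
  simp only [← hB, ← hF] at hval
  -- membership decoder
  have hmem : ∀ x ∈ F, x ∈ B ∧ γ₁ ≤ x ∧ x - γ₁ ∉ B := by
    intro x hx
    rw [hF] at hx
    have := List.mem_filter.1 hx
    exact ⟨this.1, of_decide_eq_true this.2⟩
  -- bounded terms
  have hbdd : ∀ x ∈ F,
      ((-1 : ℤ) ^ (B.filter (fun y => x - γ₁ < y ∧ y < x)).length *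
        MN (fromBeta ((x - γ₁) :: B.erase x)) (γ₂ :: γr)) ∈ ({0,1,-1} : Set ℤ) := by
    intro x hx
    obtain ⟨h1, h2, h3⟩ := hmem x hx
    exact sign_mul_mem _ _ (hsign _ (hδ x h1 h2 h3))
  match hFe : F with
  | [] =>
    exfalso
    simp at hval
  | [a] =>
    exfalso
    simp only [List.map_cons, List.map_nil, List.sum_cons, List.sum_nil, add_zero] at hval
    exact hval (hbdd a (by simp))
  | a :: b :: c :: r =>
    exfalso
    simp at hklt
  | [a, b] =>
    have ha := hmem a (by simp)
    have hb := hmem b (by simp)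
    simp only [List.map_cons, List.map_nil, List.sum_cons, List.sum_nil, add_zero] at hval
    have hane : MN (fromBeta ((a - γ₁) :: B.erase a)) (γ₂ :: γr) ≠ 0 := by
      intro h0
      rw [h0, mul_zero, zero_add] at hval
      exact hval (hbdd b (by simp))
    have hbne : MN (fromBeta ((b - γ₁) :: B.erase b)) (γ₂ :: γr) ≠ 0 := by
      intro h0
      rw [h0, mul_zero, add_zero] at hval
      exact hval (hbdd a (by simp))
    refine ⟨rfl, ?_⟩
    intro x hx hx1 hx2
    have hxF : x ∈ List.filter (fun x => decide (γ₁ ≤ x ∧ x - γ₁ ∉ B)) B :=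
      List.mem_filter.2 ⟨hx, decide_eq_true (by exact ⟨hx1, hx2⟩)⟩
    rw [← hF] at hxF
    have hxab : x = a ∨ x = b := by simpa using hxF
    have hne : MN (fromBeta ((x - γ₁) :: B.erase x)) (γ₂ :: γr) ≠ 0 := by
      rcases hxab with rfl | rfl
      · exact hane
      · exact hbne
    refine ⟨hne, ?_⟩
    by_contra hcon
    push_neg at hcon
    apply hne
    apply MN_eq_zero_of_no_hook
    intro y hy hc
    exact hc.2 (hcon y hy hc.1)
end

section
/- For a ≥ 7, the values of the irreducible characters of S_{2a+4} indexed by (a+2, a-1, 3) and by (a+2, 4, 3, 1^{a-5}) at the conjugacy class of cycle type (a, a-1, 4, 1) both equal 0. -/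
def desc (k : ℕ) : List ℕ := (List.range k).map (fun j => k - j)

lemma desc_length (k : ℕ) : (desc k).length = k := by simp [desc]

lemma desc_getElem (k i : ℕ) (h : i < (desc k).length) : (desc k)[i] = k - i := by
  simp [desc]

lemma mem_desc {k x : ℕ} : x ∈ desc k ↔ 1 ≤ x ∧ x ≤ k := by
  simp only [desc, List.mem_map, List.mem_range]
  constructor
  · rintro ⟨j, hj, rfl⟩; omega
  · rintro ⟨h1, h2⟩; exact ⟨k - x, by omega, by omega⟩

lemma desc_sorted (k : ℕ) : (desc k).Pairwise (· ≥ ·) := by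
  rw [List.pairwise_iff_getElem]
  intro i j hi hj hij
  rw [desc_getElem, desc_getElem]
  simp [desc_length] at hi hj
  omega

lemma betaSet_getElem (l : List ℕ) (i : ℕ) (h : i < (betaSet l).length) :
    (betaSet l)[i] = l[i]'(by simpa [betaSet] using h) + (l.length - 1 - i) := by
  simp [betaSet, List.getElem_zip]

lemma betaSet_rep (c1 c2 c3 k : ℕ) :
    betaSet (c1 :: c2 :: c3 :: List.replicate k 1) =
      (c1 + (k + 2)) :: (c2 + (k + 1)) :: (c3 + k) :: desc k := by
  refine List.ext_getElem (by simp [betaSet_length, desc_length]) (fun i h1 h2 => ?_)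
  rw [betaSet_getElem]
  match i with
  | 0 => simp
  | 1 => simp
  | 2 => simp
  | (j+3) =>
    have hj : j < k := by
      have := h2; simp [desc_length] at this; omega
    simp only [List.getElem_cons_succ, List.getElem_replicate, List.length_cons,
      List.length_replicate]
    rw [desc_getElem]
    omega

lemma insertionSort_eq_of {l s : List ℕ} (hp : l.Perm s) (hs : s.Pairwise (· ≥ ·)) :
    List.insertionSort (· ≥ ·) l = s :=
  List.Perm.eq_of_pairwise' (List.pairwise_insertionSort _ l) hs
    ((List.perm_insertionSort _ l).trans hp)

lemma fromBeta_sorted (l s : List ℕ) (hp : l.Perm s) (hs : s.Pairwise (· ≥ ·)) :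
    fromBeta l =
      (((List.range s.length).zip s).map (fun p => p.2 - (s.length - 1 - p.1))).filter (fun x => x ≠ 0) := by
  simp only [fromBeta]
  rw [insertionSort_eq_of hp hs]

lemma fromBeta_two (h1 h2 k : ℕ) (hh : k + 2 ≤ h2) (h12 : h2 + 1 ≤ h1) :
    fromBeta (0 :: h1 :: h2 :: desc k) = [h1 - (k + 2), h2 - (k + 1)] := by
  have hperm : (0 :: h1 :: h2 :: desc k).Perm (h1 :: h2 :: (desc k ++ [0])) := by
    have := (List.perm_append_singleton 0 (h1 :: h2 :: desc k)).symm
    simpa using this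
  have hsort : (h1 :: h2 :: (desc k ++ [0])).Pairwise (· ≥ ·) := by
    rw [List.pairwise_cons, List.pairwise_cons]
    refine ⟨?_, ?_, ?_⟩
    · intro b hb
      simp only [List.mem_cons, List.mem_append, mem_desc, List.mem_singleton,
        List.not_mem_nil, or_false] at hb
      rcases hb with rfl | ⟨hb1, hb2⟩ | rfl <;> omega
    · intro b hb
      simp only [List.mem_append, mem_desc, List.mem_singleton,
        List.not_mem_nil, or_false] at hb
      rcases hb with ⟨hb1, hb2⟩ | rfl <;> omega
    · rw [List.pairwise_append]
      refine ⟨desc_sorted k, by simp, ?_⟩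
      intro x hx b hb
      simp only [List.mem_singleton] at hb
      subst hb
      omega
  rw [fromBeta_sorted _ _ hperm hsort]
  have hmap : (((List.range (h1 :: h2 :: (desc k ++ [0])).length).zip (h1 :: h2 :: (desc k ++ [0]))).map
      (fun p => p.2 - ((h1 :: h2 :: (desc k ++ [0])).length - 1 - p.1))) =
      (h1 - (k + 2)) :: (h2 - (k + 1)) :: List.replicate (k + 1) 0 := by
    refine List.ext_getElem (by simp [desc_length]) (fun i hi1 hi2 => ?_)
    have hlen : (h1 :: h2 :: (desc k ++ [0])).length = k + 3 := by simp [desc_length]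
    simp only [List.getElem_map, List.getElem_zip, List.getElem_range, hlen]
    match i with
    | 0 => simp
    | 1 => simp
    | (j+2) =>
      have hj : j < k + 1 := by simpa [desc_length] using hi2
      simp only [List.getElem_cons_succ, List.getElem_replicate]
      rcases Nat.lt_or_ge j k with hjk | hjk
      · rw [List.getElem_append_left (by simpa [desc_length] using hjk), desc_getElem]
        omega
      · have hjk' : j = k := by omega
        subst hjk'
        rw [List.getElem_append_right (by simp [desc_length])]
        simp [desc_length]
  rw [hmap]
  rw [List.filter_cons_of_pos (by simp <;> omega), List.filter_cons_of_pos (by simp <;> omega)]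
  rw [List.filter_eq_nil_iff.mpr (by intro a ha; simp [List.eq_of_mem_replicate ha])]

lemma fromBeta_three (k : ℕ) :
    fromBeta ((k + 4) :: (k + 5) :: (k + 3) :: desc k) =
      3 :: 3 :: 3 :: List.replicate k 1 := by
  have hperm : ((k+4) :: (k+5) :: (k+3) :: desc k).Perm
      ((k+5) :: (k+4) :: (k+3) :: desc k) := List.Perm.swap _ _ _
  have hsort : ((k+5) :: (k+4) :: (k+3) :: desc k).Pairwise (· ≥ ·) := by
    rw [List.pairwise_cons, List.pairwise_cons, List.pairwise_cons]
    refine ⟨?_, ?_, ?_, desc_sorted k⟩ <;>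
      intro b hb <;>
      simp only [List.mem_cons, mem_desc] at hb
    · rcases hb with rfl | rfl | ⟨h1, h2⟩ <;> omega
    · rcases hb with rfl | ⟨h1, h2⟩ <;> omega
    · rcases hb with ⟨h1, h2⟩; omega
  rw [fromBeta_sorted _ _ hperm hsort]
  have hmap : (((List.range ((k+5) :: (k+4) :: (k+3) :: desc k).length).zip ((k+5) :: (k+4) :: (k+3) :: desc k)).map
      (fun p => p.2 - (((k+5) :: (k+4) :: (k+3) :: desc k).length - 1 - p.1))) =
      3 :: 3 :: 3 :: List.replicate k 1 := by
    refine List.ext_getElem (by simp [desc_length]) (fun i hi1 hi2 => ?_)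
    have hlen : ((k+5) :: (k+4) :: (k+3) :: desc k).length = k + 3 := by simp [desc_length]
    simp only [List.getElem_map, List.getElem_zip, List.getElem_range, hlen]
    match i with
    | 0 => simp
    | 1 => simp
    | 2 => simp
    | (j+3) =>
      have hj : j < k := by simpa [desc_length] using hi2
      simp only [List.getElem_cons_succ, List.getElem_replicate]
      rw [desc_getElem]
      omega
  rw [hmap]
  refine List.filter_eq_self.mpr (fun a ha => ?_)
  simp only [List.mem_cons] at ha
  rcases ha with rfl | rfl | rfl | ha
  · simp
  · simp
  · simp
  · have := List.eq_of_mem_replicate ha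
    simp [this]

lemma MN32 : MN [3, 2] [4, 1] = -1 := by decide +kernel

lemma MN221 : MN [2, 2, 1] [4, 1] = 1 := by decide +kernel

lemma L2 (b : ℕ) : MN [b + 9, 2] [b + 6, 4, 1] = -1 := by
  have hbs : betaSet [b + 9, 2] = [b + 10, 2] := by simp [betaSet, List.range_succ]
  rw [MN, hbs]
  simp only [List.map_cons, List.map_nil, List.sum_cons, List.sum_nil]
  have e4 : b + 10 - (b + 6) = 4 := by omega
  rw [e4]
  rw [if_pos ⟨by omega, by simp only [List.mem_cons, List.not_mem_nil, or_false]; omega⟩]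
  rw [if_neg (by rintro ⟨h, -⟩; omega)]
  rw [List.filter_cons_of_neg (by simp), List.filter_cons_of_neg (by simp),
    List.filter_nil]
  rw [show [b + 10, 2].erase (b + 10) = [2] by simp]
  norm_num
  decide +kernel

lemma L3 (b : ℕ) : MN [b + 5, 3, 3] [b + 6, 4, 1] = 1 := by
  have hbs : betaSet [b + 5, 3, 3] = [b + 7, 4, 3] := by simp [betaSet, List.range_succ]
  rw [MN, hbs]
  simp only [List.map_cons, List.map_nil, List.sum_cons, List.sum_nil]
  have e1 : b + 7 - (b + 6) = 1 := by omega
  rw [e1]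
  rw [if_pos ⟨by omega, by simp only [List.mem_cons, List.not_mem_nil, or_false]; omega⟩]
  rw [if_neg (by rintro ⟨h, -⟩; omega), if_neg (by rintro ⟨h, -⟩; omega)]
  rw [List.filter_cons_of_neg (by simp), List.filter_cons_of_pos (by simp <;> omega),
    List.filter_cons_of_pos (by simp <;> omega), List.filter_nil]
  rw [show [b + 7, 4, 3].erase (b + 7) = [4, 3] by simp]
  rw [show fromBeta [1, 4, 3] = [2, 2, 1] from by decide +kernel]
  rw [MN221]
  norm_num

lemma L4 (b : ℕ) : MN [b + 9, b + 6, 3] [b + 7, b + 6, 4, 1] = 0 := by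
  have hbs : betaSet [b + 9, b + 6, 3] = [b + 11, b + 7, 3] := by simp [betaSet, List.range_succ]
  rw [MN, hbs]
  simp only [List.map_cons, List.map_nil, List.sum_cons, List.sum_nil]
  have e1 : b + 11 - (b + 7) = 4 := by omega
  have e2 : b + 7 - (b + 7) = 0 := by omega
  rw [e1, e2]
  rw [if_pos ⟨by omega, by simp only [List.mem_cons, List.not_mem_nil, or_false]; omega⟩]
  rw [if_pos ⟨by omega, by simp only [List.mem_cons, List.not_mem_nil, or_false]; omega⟩]
  rw [if_neg (by rintro ⟨h, -⟩; omega)]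
  -- first filter : 4 < y < b+11 on [b+11, b+7, 3] → [b+7]
  rw [List.filter_cons_of_neg (by simp), List.filter_cons_of_pos (by simp <;> omega),
    List.filter_cons_of_neg (by simp), List.filter_nil]
  -- second filter : 0 < y < b+7 on [b+11, b+7, 3] → [3]
  rw [List.filter_cons_of_neg (by simp <;> omega), List.filter_cons_of_neg (by simp),
    List.filter_cons_of_pos (by simp), List.filter_nil]
  rw [show [b + 11, b + 7, 3].erase (b + 11) = [b + 7, 3] by simp]
  rw [show [b + 11, b + 7, 3].erase (b + 7) = [b + 11, 3] from by
    rw [List.erase_cons_tail (by simp)]; simp]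
  have hfb1 : fromBeta (4 :: [b + 7, 3]) = [b + 5, 3, 3] := by
    rw [fromBeta_sorted _ [b + 7, 4, 3] (List.Perm.swap _ _ _)
      (by simp [List.pairwise_cons] <;> omega)]
    simp only [List.range_succ, List.range_zero, List.nil_append, List.cons_append, List.zip_cons_cons, List.map_cons, List.map_nil, List.length_cons,
      List.length_nil]
    norm_num
    rw [show b + 7 - 2 = b + 5 by omega]
    rw [List.filter_cons_of_pos (by simp <;> omega), List.filter_cons_of_pos (by simp),
      List.filter_cons_of_pos (by simp), List.filter_nil]
  have hfb2 : fromBeta (0 :: [b + 11, 3]) = [b + 9, 2] := by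
    have hperm : (0 :: [b + 11, 3]).Perm [b + 11, 3, 0] := by
      have := (List.perm_append_singleton 0 [b + 11, 3]).symm
      simpa using this
    rw [fromBeta_sorted _ [b + 11, 3, 0] hperm (by simp [List.pairwise_cons])]
    simp only [List.range_succ, List.range_zero, List.nil_append, List.cons_append, List.zip_cons_cons, List.map_cons, List.map_nil, List.length_cons,
      List.length_nil]
    norm_num
    rw [show b + 11 - 2 = b + 9 by omega]
    rw [List.filter_cons_of_pos (by simp <;> omega), List.filter_cons_of_pos (by simp),
      List.filter_cons_of_neg (by simp), List.filter_nil]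
  rw [hfb1, hfb2, L2, L3]
  norm_num

lemma desc_term_sum (q k : ℕ) (γ B : List ℕ) (hq : k < q) :
    (List.map (fun x => if q ≤ x ∧ x - q ∉ B then
      (-1) ^ (B.filter (fun y => x - q < y ∧ y < x)).length *
        MN (fromBeta ((x - q) :: B.erase x)) γ else 0) (desc k)).sum = 0 := by
  apply List.sum_eq_zero
  intro z hz
  simp only [List.mem_map] at hz
  obtain ⟨x, hx, rfl⟩ := hz
  rw [if_neg]
  rintro ⟨h1, -⟩
  have := (mem_desc.1 hx).2
  omega

lemma L5 (k : ℕ) (hk : 2 ≤ k) :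
    MN (3 :: 3 :: 3 :: List.replicate k 1) [k + 4, 4, 1] = (-1) ^ k := by
  have hbs : betaSet (3 :: 3 :: 3 :: List.replicate k 1) =
      (k + 5) :: (k + 4) :: (k + 3) :: desc k := by
    rw [betaSet_rep, show 3 + (k + 2) = k + 5 by omega, show 3 + (k + 1) = k + 4 by omega,
      show 3 + k = k + 3 by omega]
  rw [MN, hbs]
  simp only [List.map_cons, List.sum_cons]
  rw [desc_term_sum _ _ _ _ (by omega)]
  rw [show k + 5 - (k + 4) = 1 by omega, show k + 4 - (k + 4) = 0 by omega]
  rw [if_neg (by rintro ⟨-, h⟩; exact h (by simp [mem_desc]; omega))]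
  rw [if_pos ⟨by omega, by simp [mem_desc]⟩]
  rw [if_neg (by rintro ⟨h, -⟩; omega)]
  -- filter : 0 < y < k+4 → (k+3) :: desc k
  rw [List.filter_cons_of_neg (by simp), List.filter_cons_of_neg (by simp),
    List.filter_cons_of_pos (by simp),
    List.filter_eq_self.mpr (fun a ha => by
      have := mem_desc.1 ha; simp; omega)]
  rw [show ((k + 5) :: (k + 4) :: (k + 3) :: desc k).erase (k + 4) =
      (k + 5) :: (k + 3) :: desc k from by
    rw [List.erase_cons_tail (by simp)]
    simp]
  rw [fromBeta_two _ _ _ (by omega) (by omega)]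
  rw [show k + 5 - (k + 2) = 3 by omega, show k + 3 - (k + 1) = 2 by omega]
  rw [MN32]
  simp only [List.length_cons, desc_length]
  rw [pow_succ]
  ring

lemma L6 (k : ℕ) (hk : 2 ≤ k) :
    MN ((k + 7) :: 4 :: 3 :: List.replicate k 1) [k + 5, k + 4, 4, 1] = 0 := by
  have hbs : betaSet ((k + 7) :: 4 :: 3 :: List.replicate k 1) =
      (2 * k + 9) :: (k + 5) :: (k + 3) :: desc k := by
    rw [betaSet_rep, show k + 7 + (k + 2) = 2 * k + 9 by omega,
      show 4 + (k + 1) = k + 5 by omega, show 3 + k = k + 3 by omega]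
  rw [MN, hbs]
  simp only [List.map_cons, List.sum_cons]
  rw [desc_term_sum _ _ _ _ (by omega)]
  rw [show 2 * k + 9 - (k + 5) = k + 4 by omega, show k + 5 - (k + 5) = 0 by omega]
  rw [if_pos ⟨by omega, by simp [mem_desc] <;> omega⟩]
  rw [if_pos ⟨by omega, by simp [mem_desc]⟩]
  rw [if_neg (by rintro ⟨h, -⟩; omega)]
  -- filter : k+4 < y < 2k+9 → [k+5]
  rw [List.filter_cons_of_neg (by simp), List.filter_cons_of_pos (by simp <;> omega),
    List.filter_cons_of_neg (by simp <;> omega),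
    List.filter_eq_nil_iff.mpr (fun a ha => by
      have := mem_desc.1 ha; simp; omega)]
  -- filter : 0 < y < k+5 → (k+3) :: desc k
  rw [List.filter_cons_of_neg (by simp <;> omega), List.filter_cons_of_neg (by simp),
    List.filter_cons_of_pos (by simp),
    List.filter_eq_self.mpr (fun a ha => by
      have := mem_desc.1 ha; simp; omega)]
  rw [show ((2 * k + 9) :: (k + 5) :: (k + 3) :: desc k).erase (2 * k + 9) =
      (k + 5) :: (k + 3) :: desc k from by simp]
  rw [show ((2 * k + 9) :: (k + 5) :: (k + 3) :: desc k).erase (k + 5) =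
      (2 * k + 9) :: (k + 3) :: desc k from by
    rw [List.erase_cons_tail (by simp <;> omega)]
    simp]
  rw [fromBeta_three k]
  rw [fromBeta_two _ _ _ (by omega) (by omega)]
  rw [show 2 * k + 9 - (k + 2) = k + 7 by omega, show k + 3 - (k + 1) = 2 by omega]
  rw [L5 k hk]
  have hL2 := L2 (k - 2)
  rw [show k - 2 + 9 = k + 7 by omega, show k - 2 + 6 = k + 4 by omega] at hL2
  rw [hL2]
  simp only [List.length_cons, desc_length, List.length_nil, List.length_singleton]
  rw [pow_succ]
  ring

/-- For `a ≥ 7`, the irreducible characters of `S_{2a+4}` indexed by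
`(a+2, a-1, 3)` and by `(a+2, 4, 3, 1^{a-5})` both vanish at the class of
cycle type `(a, a-1, 4, 1)`. -/
theorem stmt_12 (a : ℕ) (ha : 7 ≤ a) :
    MN [a + 2, a - 1, 3] [a, a - 1, 4, 1] = 0 ∧
    MN ((a + 2) :: 4 :: 3 :: List.replicate (a - 5) 1) [a, a - 1, 4, 1] = 0 := by
  obtain ⟨b, rfl⟩ : ∃ b, a = b + 7 := ⟨a - 7, by omega⟩
  constructor
  · rw [show b + 7 + 2 = b + 9 by omega, show b + 7 - 1 = b + 6 by omega]
    exact L4 b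
  · rw [show b + 7 + 2 = b + 2 + 7 by omega, show b + 7 - 5 = b + 2 by omega,
      show b + 7 - 1 = b + 2 + 4 by omega, show b + 7 = b + 2 + 5 by omega]
    exact L6 (b + 2) (by omega)
end
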